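/- Let d ≥ 1 be an integer, 1 ≤ p < ∞ and 0 < s < 1 real numbers, let u, û : ℝ^d → ℝ be measurable, and let q : ℝ → ℝ be a differentiable function with q(0) = 0 and 0 ≤ q′(t) ≤ 1 for all t ∈ ℝ. Set w := û − u, v₁ := û − q∘w and v₂ := u + q∘w. Then, as integrals with values in [0,∞], ∫_{ℝ^d}∫_{ℝ^d} |v₁(x)−v₁(y)|^p/|x−y|^{d+sp} dx dy + ∫_{ℝ^d}∫_{ℝ^d} |v₂(x)−v₂(y)|^p/|x−y|^{d+sp} dx dy ≤ ∫_{ℝ^d}∫_{ℝ^d} |u(x)−u(y)|^p/|x−y|^{d+sp} dx dy + ∫_{ℝ^d}∫_{ℝ^d} |û(x)−û(y)|^p/|x−y|^{d+sp} dx dy. -/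

import Mathlib

open MeasureTheory

/-- The `p`-th power of the `s`-Gagliardo seminorm,
`[v]_{s,p}^p = ∫∫ |v(x)−v(y)|^p / |x−y|^(d+sp) dx dy`, as an `ℝ≥0∞`-valued
double Lebesgue integral. -/
noncomputable def gEnergy (d : ℕ) (s p : ℝ) (v : EuclideanSpace ℝ (Fin d) → ℝ) : ENNReal :=
  ∫⁻ x, ∫⁻ y, ENNReal.ofReal (|v x - v y| ^ p / ‖x - y‖ ^ ((d : ℝ) + s * p))

/-- Convexity step: `|(1−θ)b + θa|^p ≤ (1−θ)|b|^p + θ|a|^p`. -/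
lemma aux_convex {p : ℝ} (hp : 1 ≤ p) (a b θ : ℝ) (h0 : 0 ≤ θ) (h1 : θ ≤ 1) :
    |(1 - θ) * b + θ * a| ^ p ≤ (1 - θ) * |b| ^ p + θ * |a| ^ p := by
  have h2 : |(1 - θ) * b + θ * a| ≤ (1 - θ) * |b| + θ * |a| := by
    calc |(1 - θ) * b + θ * a| ≤ |(1 - θ) * b| + |θ * a| := abs_add_le _ _
      _ = (1 - θ) * |b| + θ * |a| := by
          rw [abs_mul, abs_mul, abs_of_nonneg (by linarith), abs_of_nonneg h0]
  have h3 : |(1 - θ) * b + θ * a| ^ p ≤ ((1 - θ) * |b| + θ * |a|) ^ p :=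
    Real.rpow_le_rpow (abs_nonneg _) h2 (by linarith)
  have h4 := (convexOn_rpow hp).2 (Set.mem_Ici.2 (abs_nonneg b))
    (Set.mem_Ici.2 (abs_nonneg a)) (by linarith : (0:ℝ) ≤ 1 - θ) h0 (by ring)
  simpa using h3.trans h4

/-- Mean value step: the increment of `q` is `θ` times the increment of the argument. -/
lemma aux_mvt {q : ℝ → ℝ} (hq : Differentiable ℝ q)
    (hq' : ∀ t : ℝ, 0 ≤ deriv q t ∧ deriv q t ≤ 1) (r r' : ℝ) :
    ∃ θ : ℝ, 0 ≤ θ ∧ θ ≤ 1 ∧ q r - q r' = θ * (r - r') := by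
  rcases lt_trichotomy r' r with h | h | h
  · obtain ⟨c, -, hc⟩ := exists_deriv_eq_slope q h hq.continuous.continuousOn
      hq.differentiableOn
    rw [eq_div_iff (sub_ne_zero.2 h.ne')] at hc
    exact ⟨deriv q c, (hq' c).1, (hq' c).2, by linear_combination -hc⟩
  · exact ⟨0, le_refl 0, zero_le_one, by rw [h]; ring⟩
  · obtain ⟨c, -, hc⟩ := exists_deriv_eq_slope q h hq.continuous.continuousOn
      hq.differentiableOn
    rw [eq_div_iff (sub_ne_zero.2 h.ne')] at hc
    exact ⟨deriv q c, (hq' c).1, (hq' c).2, by linear_combination hc⟩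

/-- Key scalar inequality. -/
lemma aux_scalar {p : ℝ} (hp : 1 ≤ p) (a b θ : ℝ) (h0 : 0 ≤ θ) (h1 : θ ≤ 1) :
    |b - θ * (b - a)| ^ p + |a + θ * (b - a)| ^ p ≤ |a| ^ p + |b| ^ p := by
  have e1 : b - θ * (b - a) = (1 - θ) * b + θ * a := by ring
  have e2 : a + θ * (b - a) = (1 - θ) * a + θ * b := by ring
  rw [e1, e2]
  have c1 := aux_convex hp a b θ h0 h1
  have c2 := aux_convex hp b a θ h0 h1
  linarith

lemma aux_meas {d : ℕ} {v : EuclideanSpace ℝ (Fin d) → ℝ} (hv : Measurable v) (c p : ℝ) :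
    Measurable fun z : EuclideanSpace ℝ (Fin d) × EuclideanSpace ℝ (Fin d) =>
      ENNReal.ofReal (|v z.1 - v z.2| ^ p / ‖z.1 - z.2‖ ^ c) := by
  apply ENNReal.measurable_ofReal.comp
  apply Measurable.div
  · exact (((hv.comp measurable_fst).sub (hv.comp measurable_snd)).abs).pow measurable_const
  · exact ((measurable_fst.sub measurable_snd).norm).pow measurable_const

/-- Functional inequality from the proof of Corollary 3.2: for measurable
`u, û : ℝ^d → ℝ` and a differentiable `q` with `q(0) = 0`, `0 ≤ q′ ≤ 1`, setting
`w := û − u`, `v₁ := û − q∘w`, `v₂ := u + q∘w`, one has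
`[v₁]_{s,p}^p + [v₂]_{s,p}^p ≤ [u]_{s,p}^p + [û]_{s,p}^p`. -/
theorem stmt11 (d : ℕ) (hd : 1 ≤ d) (p s : ℝ) (hp : 1 ≤ p) (hs : s ∈ Set.Ioo (0 : ℝ) 1)
    (u uh : EuclideanSpace ℝ (Fin d) → ℝ) (hu : Measurable u) (huh : Measurable uh)
    (q : ℝ → ℝ) (hq : Differentiable ℝ q) (hq0 : q 0 = 0)
    (hq' : ∀ t : ℝ, 0 ≤ deriv q t ∧ deriv q t ≤ 1) :
    gEnergy d s p (fun x => uh x - q (uh x - u x)) +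
        gEnergy d s p (fun x => u x + q (uh x - u x))
      ≤ gEnergy d s p u + gEnergy d s p uh := by
  set c : ℝ := (d : ℝ) + s * p with hc
  set v₁ : EuclideanSpace ℝ (Fin d) → ℝ := fun x => uh x - q (uh x - u x) with hv₁
  set v₂ : EuclideanSpace ℝ (Fin d) → ℝ := fun x => u x + q (uh x - u x) with hv₂
  have hqm : Measurable q := hq.continuous.measurable
  have hv₁m : Measurable v₁ := huh.sub (hqm.comp (huh.sub hu))
  have hv₂m : Measurable v₂ := hu.add (hqm.comp (huh.sub hu))
  set F : (EuclideanSpace ℝ (Fin d) → ℝ) → EuclideanSpace ℝ (Fin d) →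
      EuclideanSpace ℝ (Fin d) → ENNReal :=
    fun v x y => ENNReal.ofReal (|v x - v y| ^ p / ‖x - y‖ ^ c) with hF
  -- pointwise inequality
  have key : ∀ x y, F v₁ x y + F v₂ x y ≤ F u x y + F uh x y := by
    intro x y
    set a := u x - u y
    set b := uh x - uh y
    obtain ⟨θ, h0, h1, hθ⟩ := aux_mvt hq hq' (uh x - u x) (uh y - u y)
    have hab : (uh x - u x) - (uh y - u y) = b - a := by ring
    rw [hab] at hθ
    have e1 : v₁ x - v₁ y = b - θ * (b - a) := by simp only [hv₁]; rw [← hθ]; ring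
    have e2 : v₂ x - v₂ y = a + θ * (b - a) := by simp only [hv₂]; rw [← hθ]; ring
    have hsc := aux_scalar hp a b θ h0 h1
    have hD : (0:ℝ) ≤ ‖x - y‖ ^ c := Real.rpow_nonneg (norm_nonneg _) _
    simp only [hF, e1, e2]
    have hnn : ∀ t : ℝ, (0:ℝ) ≤ |t| ^ p / ‖x - y‖ ^ c := fun t =>
      div_nonneg (Real.rpow_nonneg (abs_nonneg _) _) hD
    rw [← ENNReal.ofReal_add (hnn _) (hnn _), ← ENNReal.ofReal_add (hnn _) (hnn _),
      ← add_div, ← add_div]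
    exact ENNReal.ofReal_le_ofReal (div_le_div_of_nonneg_right hsc hD)
  -- measurability of the inner integrals
  have m₁ : Measurable fun x => ∫⁻ y, F v₁ x y :=
    (aux_meas hv₁m c p).lintegral_prod_right'
  have mu : Measurable fun x => ∫⁻ y, F u x y :=
    (aux_meas hu c p).lintegral_prod_right'
  have hE1 : gEnergy d s p v₁ + gEnergy d s p v₂
      = ∫⁻ x, ∫⁻ y, (F v₁ x y + F v₂ x y) := by
    have outer := lintegral_add_left (μ := volume) m₁ (fun x => ∫⁻ y, F v₂ x y)
    have inner : ∀ x, (∫⁻ y, (F v₁ x y + F v₂ x y))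
        = (∫⁻ y, F v₁ x y) + ∫⁻ y, F v₂ x y := fun x =>
      lintegral_add_left ((aux_meas hv₁m c p).comp measurable_prodMk_left) _
    calc gEnergy d s p v₁ + gEnergy d s p v₂
        = ∫⁻ x, ((∫⁻ y, F v₁ x y) + ∫⁻ y, F v₂ x y) := outer.symm
      _ = ∫⁻ x, ∫⁻ y, (F v₁ x y + F v₂ x y) := by
          congr 1; funext x; exact (inner x).symm
  have hE2 : gEnergy d s p u + gEnergy d s p uh
      = ∫⁻ x, ∫⁻ y, (F u x y + F uh x y) := by
    have outer := lintegral_add_left (μ := volume) mu (fun x => ∫⁻ y, F uh x y)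
    have inner : ∀ x, (∫⁻ y, (F u x y + F uh x y))
        = (∫⁻ y, F u x y) + ∫⁻ y, F uh x y := fun x =>
      lintegral_add_left ((aux_meas hu c p).comp measurable_prodMk_left) _
    calc gEnergy d s p u + gEnergy d s p uh
        = ∫⁻ x, ((∫⁻ y, F u x y) + ∫⁻ y, F uh x y) := outer.symm
      _ = ∫⁻ x, ∫⁻ y, (F u x y + F uh x y) := by
          congr 1; funext x; exact (inner x).symm
  rw [hE1, hE2]
  exact lintegral_mono fun x => lintegral_mono fun y => key x y
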